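/- Fix σ₁, σ₂, U, τ > 0 and let χ(K) = C^σ(U,K,τ) for K > 0, where C^σ is the explicit PCLVG call price. Then χ is continuously differentiable on (0,∞) (in particular the two explicit pieces match to first order at K = U), twice continuously differentiable on (0,U) and on (U,∞), and satisfies the ordinary differential equation σ₁²·χ''(K) − χ(K)/τ² = −(U−K)/τ² for 0 < K < U and σ₂²·χ''(K) − χ(K)/τ² = 0 for K > U; moreover lim_{K→0+} χ(K) = U and lim_{K→∞} χ(K) = 0. -/

import Mathlib

open MeasureTheory Filter Set

/-- Standard normal cumulative distribution function. -/
noncomputable def stdNormalCDF (x : ℝ) : ℝ :=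
  (Real.sqrt (2 * Real.pi))⁻¹ * ∫ y in Set.Iic x, Real.exp (-(y ^ 2) / 2)

/-- Black–Scholes call price with zero interest and dividend rates. -/
noncomputable def bsCall (S K τ σ : ℝ) : ℝ :=
  let d1 := (Real.log (S / K) + σ ^ 2 * τ / 2) / (σ * Real.sqrt τ)
  S * stdNormalCDF d1 - K * stdNormalCDF (d1 - σ * Real.sqrt τ)

/-- Black–Scholes put price with zero interest and dividend rates. -/
noncomputable def bsPut (S K τ σ : ℝ) : ℝ := bsCall S K τ σ - S + K

/-- The denominator appearing in the PCLVG call price formula. -/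
noncomputable def pclvgD (σ1 σ2 U τ : ℝ) : ℝ :=
  1 / σ1 + 1 / σ2 - (1 / σ2 - 1 / σ1) * Real.exp (-2 * U / (σ1 * τ))

/-- The explicit PCLVG call price `C^σ(U,K,τ)`. -/
noncomputable def pclvgCall (σ1 σ2 U K τ : ℝ) : ℝ :=
  if K < U then
    (U - K) +
      τ * Real.exp (-(U - K) / (σ1 * τ)) * (1 - Real.exp (-2 * K / (σ1 * τ))) /
        pclvgD σ1 σ2 U τ
  else
    τ * Real.exp (-(K - U) / (σ2 * τ)) * (1 - Real.exp (-2 * U / (σ1 * τ))) /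
      pclvgD σ1 σ2 U τ

/-- The PCLVG put price `P^σ(U,K,τ) = C^σ(U,K,τ) − (U − K)`. -/
noncomputable def pclvgPut (σ1 σ2 U K τ : ℝ) : ℝ := pclvgCall σ1 σ2 U K τ - (U - K)

lemma expAff_hasDerivAt (c a m x : ℝ) :
    HasDerivAt (fun K => c * Real.exp (a * K + m)) (c * a * Real.exp (a * x + m)) x := by
  have h : HasDerivAt (fun K : ℝ => a * K + m) a x := by
    simpa using ((hasDerivAt_id x).const_mul a).add_const m
  have := ((Real.hasDerivAt_exp (a * x + m)).comp x h).const_mul c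
  exact this.congr_deriv (by ring)

lemma expAff_contDiff (c a m : ℝ) (n : WithTop ℕ∞) :
    ContDiff ℝ n (fun K => c * Real.exp (a * K + m)) := by
  apply ContDiff.of_le _ (le_top : n ≤ ⊤)
  fun_prop

/-- The smooth formula for the PCLVG call below the barrier. -/
noncomputable def pg1 (U c a K : ℝ) : ℝ :=
  (U - K) + c * Real.exp (a * K + -(a * U)) - c * Real.exp (-a * K + -(a * U))

noncomputable def pg1d (U c a K : ℝ) : ℝ :=
  -1 + c * a * Real.exp (a * K + -(a * U)) + c * a * Real.exp (-a * K + -(a * U))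

noncomputable def pg1dd (U c a K : ℝ) : ℝ :=
  c * a * a * Real.exp (a * K + -(a * U)) - c * a * a * Real.exp (-a * K + -(a * U))

/-- The smooth formula for the PCLVG call above the barrier. -/
noncomputable def pg2 (U c b K : ℝ) : ℝ := c * Real.exp (-b * K + b * U)

noncomputable def pg2d (U c b K : ℝ) : ℝ := -(c * b) * Real.exp (-b * K + b * U)

noncomputable def pg2dd (U c b K : ℝ) : ℝ := c * b * b * Real.exp (-b * K + b * U)

lemma hasDerivAt_pg1 (U c a K : ℝ) : HasDerivAt (pg1 U c a) (pg1d U c a K) K := by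
  unfold pg1 pg1d
  have h0 : HasDerivAt (fun K : ℝ => U - K) (-1) K := by
    simpa using (hasDerivAt_id K).const_sub U
  have h1 := expAff_hasDerivAt c a (-(a * U)) K
  have h2 := expAff_hasDerivAt c (-a) (-(a * U)) K
  exact ((h0.add h1).sub h2).congr_deriv (by ring)

lemma hasDerivAt_pg1d (U c a K : ℝ) : HasDerivAt (pg1d U c a) (pg1dd U c a K) K := by
  unfold pg1d pg1dd
  have h1 := expAff_hasDerivAt (c * a) a (-(a * U)) K
  have h2 := expAff_hasDerivAt (c * a) (-a) (-(a * U)) K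
  exact (((hasDerivAt_const K (-1 : ℝ)).add h1).add h2).congr_deriv (by ring)

lemma hasDerivAt_pg2 (U c b K : ℝ) : HasDerivAt (pg2 U c b) (pg2d U c b K) K := by
  unfold pg2 pg2d
  have h1 := expAff_hasDerivAt c (-b) (b * U) K
  convert h1 using 1
  ring

lemma hasDerivAt_pg2d (U c b K : ℝ) : HasDerivAt (pg2d U c b) (pg2dd U c b K) K := by
  unfold pg2d pg2dd
  have h1 := expAff_hasDerivAt (-(c * b)) (-b) (b * U) K
  convert h1 using 1
  ring

lemma contDiff_pg1 (U c a : ℝ) (n : WithTop ℕ∞) : ContDiff ℝ n (pg1 U c a) := by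
  unfold pg1
  exact ((contDiff_const.sub contDiff_id).add (expAff_contDiff c a (-(a * U)) n)).sub
    (expAff_contDiff c (-a) (-(a * U)) n)

lemma contDiff_pg2 (U c b : ℝ) (n : WithTop ℕ∞) : ContDiff ℝ n (pg2 U c b) := by
  unfold pg2
  exact expAff_contDiff c (-b) (b * U) n

lemma continuous_pg1d (U c a : ℝ) : Continuous (pg1d U c a) := by
  unfold pg1d; fun_prop

lemma continuous_pg2d (U c b : ℝ) : Continuous (pg2d U c b) := by
  unfold pg2d; fun_prop

/-- For fixed `σ₁, σ₂, U, τ > 0`, the function `χ(K) = C^σ(U,K,τ)` is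
continuously differentiable on `(0,∞)`, twice continuously differentiable on `(0,U)` and on
`(U,∞)`, satisfies `σ₁²χ'' − χ/τ² = −(U−K)/τ²` on `(0,U)` and `σ₂²χ'' − χ/τ² = 0` on `(U,∞)`,
and has the boundary limits `χ(0+) = U`, `χ(∞) = 0`. -/
theorem pclvgCall_strike_ODE (σ1 σ2 U τ : ℝ)
    (h1 : 0 < σ1) (h2 : 0 < σ2) (hU : 0 < U) (hτ : 0 < τ) :
    ContDiffOn ℝ 1 (fun K => pclvgCall σ1 σ2 U K τ) (Set.Ioi 0) ∧
    ContDiffOn ℝ 2 (fun K => pclvgCall σ1 σ2 U K τ) (Set.Ioo 0 U) ∧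
    ContDiffOn ℝ 2 (fun K => pclvgCall σ1 σ2 U K τ) (Set.Ioi U) ∧
    (∀ K ∈ Set.Ioo 0 U,
      σ1 ^ 2 * deriv (deriv (fun K' => pclvgCall σ1 σ2 U K' τ)) K -
        pclvgCall σ1 σ2 U K τ / τ ^ 2 = -(U - K) / τ ^ 2) ∧
    (∀ K ∈ Set.Ioi U,
      σ2 ^ 2 * deriv (deriv (fun K' => pclvgCall σ1 σ2 U K' τ)) K -
        pclvgCall σ1 σ2 U K τ / τ ^ 2 = 0) ∧
    Filter.Tendsto (fun K => pclvgCall σ1 σ2 U K τ) (nhdsWithin 0 (Set.Ioi 0)) (nhds U) ∧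
    Filter.Tendsto (fun K => pclvgCall σ1 σ2 U K τ) Filter.atTop (nhds 0) := by
  have hσ1 : σ1 ≠ 0 := h1.ne'
  have hσ2 : σ2 ≠ 0 := h2.ne'
  have hτ0 : τ ≠ 0 := hτ.ne'
  set D := pclvgD σ1 σ2 U τ with hD
  set E := Real.exp (-2 * U / (σ1 * τ)) with hE
  have hE0 : 0 < E := Real.exp_pos _
  have hE1 : E < 1 := by
    rw [hE, Real.exp_lt_one_iff]
    exact div_neg_of_neg_of_pos (by linarith) (mul_pos h1 hτ)
  have hDeq : D = (1 + E) / σ1 + (1 - E) / σ2 := by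
    rw [hD, hE]; unfold pclvgD; field_simp; ring
  have hD0 : 0 < D := by
    rw [hDeq]
    exact add_pos (div_pos (by linarith) h1) (div_pos (by linarith) h2)
  set a := (σ1 * τ)⁻¹ with ha
  set b := (σ2 * τ)⁻¹ with hb
  set c := τ / D with hc
  set c2 := τ * (1 - E) / D with hc2
  -- the piecewise identifications
  have hEq1 : ∀ K, K < U → pclvgCall σ1 σ2 U K τ = pg1 U c a K := by
    intro K hK
    simp only [pclvgCall, if_pos hK]
    rw [← hD]
    unfold pg1
    have e1 : Real.exp (-(U - K) / (σ1 * τ)) = Real.exp (a * K + -(a * U)) := by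
      congr 1; rw [ha]; ring
    have e2 : Real.exp (-(U - K) / (σ1 * τ)) * Real.exp (-2 * K / (σ1 * τ)) =
        Real.exp (-a * K + -(a * U)) := by
      rw [← Real.exp_add]; congr 1; rw [ha]; ring
    rw [← e1, ← e2, hc]
    ring
  have hEq2 : ∀ K, U ≤ K → pclvgCall σ1 σ2 U K τ = pg2 U c2 b K := by
    intro K hK
    simp only [pclvgCall, if_neg (not_lt.mpr hK)]
    rw [← hD, ← hE]
    unfold pg2
    have e3 : Real.exp (-(K - U) / (σ2 * τ)) = Real.exp (-b * K + b * U) := by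
      congr 1; rw [hb]; ring
    rw [← e3, hc2]
    ring
  -- junction identities
  have hg12 : pg1 U c a U = pg2 U c2 b U := by
    unfold pg1 pg2
    rw [show a * U + -(a * U) = (0 : ℝ) by ring,
      show -a * U + -(a * U) = -2 * U / (σ1 * τ) by rw [ha]; ring,
      show -b * U + b * U = (0 : ℝ) by ring, Real.exp_zero, ← hE, hc, hc2]
    ring
  have hDeq' : σ1 * σ2 * D = σ2 * (1 + E) + σ1 * (1 - E) := by
    rw [hDeq]; field_simp
  have hd12 : pg1d U c a U = pg2d U c2 b U := by
    unfold pg1d pg2d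
    rw [show a * U + -(a * U) = (0 : ℝ) by ring,
      show -a * U + -(a * U) = -2 * U / (σ1 * τ) by rw [ha]; ring,
      show -b * U + b * U = (0 : ℝ) by ring, Real.exp_zero, ← hE, hc, hc2, ha, hb]
    field_simp
    linear_combination -hDeq'
  -- global derivative
  have hχHas : ∀ K, HasDerivAt (fun K => pclvgCall σ1 σ2 U K τ)
      (if K < U then pg1d U c a K else pg2d U c2 b K) K := by
    intro K
    rcases lt_trichotomy K U with h | h | h
    · rw [if_pos h]
      have hev : (fun K => pclvgCall σ1 σ2 U K τ) =ᶠ[nhds K] pg1 U c a :=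
        eventually_of_mem (Iio_mem_nhds h) (fun x hx => hEq1 x hx)
      exact hev.hasDerivAt_iff.mpr (hasDerivAt_pg1 U c a K)
    · rw [h, if_neg (lt_irrefl U)]
      have hIci : HasDerivWithinAt (fun K' => pclvgCall σ1 σ2 U K' τ)
          (pg2d U c2 b U) (Ici U) U :=
        (hasDerivAt_pg2 U c2 b U).hasDerivWithinAt.congr
          (fun y hy => hEq2 y hy) (hEq2 U le_rfl)
      have hIic : HasDerivWithinAt (fun K' => pclvgCall σ1 σ2 U K' τ)
          (pg2d U c2 b U) (Iic U) U := by
        have h' := (hasDerivAt_pg1 U c a U).hasDerivWithinAt (s := Iic U)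
        rw [hd12] at h'
        refine h'.congr (fun y hy => ?_) ((hEq2 U le_rfl).trans hg12.symm)
        rcases lt_or_eq_of_le (mem_Iic.mp hy) with h'' | h''
        · exact hEq1 y h''
        · rw [h'']; exact (hEq2 U le_rfl).trans hg12.symm
      have := hIic.union hIci
      rwa [Iic_union_Ici, hasDerivWithinAt_univ] at this
    · rw [if_neg (not_lt.mpr h.le)]
      have hev : (fun K => pclvgCall σ1 σ2 U K τ) =ᶠ[nhds K] pg2 U c2 b :=
        eventually_of_mem (Ioi_mem_nhds h) (fun x hx => hEq2 x (le_of_lt hx))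
      exact hev.hasDerivAt_iff.mpr (hasDerivAt_pg2 U c2 b K)
  have hderiv : deriv (fun K => pclvgCall σ1 σ2 U K τ) =
      fun K => if K < U then pg1d U c a K else pg2d U c2 b K :=
    funext fun K => (hχHas K).deriv
  -- continuity of the derivative
  have hcontd : Continuous (fun K => if K < U then pg1d U c a K else pg2d U c2 b K) := by
    have heq : (fun K => if K < U then pg1d U c a K else pg2d U c2 b K) =
        fun K => if K ≤ U then pg1d U c a K else pg2d U c2 b K := by
      funext K
      rcases lt_trichotomy K U with h | h | h
      · rw [if_pos h, if_pos h.le]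
      · subst h
        rw [if_neg (lt_irrefl K), if_pos le_rfl, hd12]
      · rw [if_neg (not_lt.mpr h.le), if_neg (not_le.mpr h)]
    rw [heq]
    exact Continuous.if_le (continuous_pg1d U c a) (continuous_pg2d U c2 b)
      continuous_id continuous_const (fun x hx => by rw [hx]; exact hd12)
  -- C¹ on (0, ∞)
  have hC1 : ContDiffOn ℝ 1 (fun K => pclvgCall σ1 σ2 U K τ) (Set.Ioi 0) := by
    rw [show (1 : WithTop ℕ∞) = 0 + 1 by rw [zero_add],
      contDiffOn_succ_iff_deriv_of_isOpen isOpen_Ioi]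
    refine ⟨fun K _ => (hχHas K).differentiableAt.differentiableWithinAt, by simp, ?_⟩
    rw [contDiffOn_zero, hderiv]
    exact hcontd.continuousOn
  -- C² on the two pieces
  have hC2a : ContDiffOn ℝ 2 (fun K => pclvgCall σ1 σ2 U K τ) (Set.Ioo 0 U) :=
    ((contDiff_pg1 U c a 2).contDiffOn).congr (fun K hK => hEq1 K hK.2)
  have hC2b : ContDiffOn ℝ 2 (fun K => pclvgCall σ1 σ2 U K τ) (Set.Ioi U) :=
    ((contDiff_pg2 U c2 b 2).contDiffOn).congr (fun K hK => hEq2 K (le_of_lt hK))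
  -- second derivatives
  have hdd1 : ∀ K, K < U →
      deriv (deriv (fun K' => pclvgCall σ1 σ2 U K' τ)) K = pg1dd U c a K := by
    intro K h
    have hev : deriv (fun K' => pclvgCall σ1 σ2 U K' τ) =ᶠ[nhds K] pg1d U c a := by
      rw [hderiv]
      exact eventually_of_mem (Iio_mem_nhds h) (fun x hx => if_pos hx)
    rw [Filter.EventuallyEq.deriv_eq hev, (hasDerivAt_pg1d U c a K).deriv]
  have hdd2 : ∀ K, U < K →
      deriv (deriv (fun K' => pclvgCall σ1 σ2 U K' τ)) K = pg2dd U c2 b K := by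
    intro K h
    have hev : deriv (fun K' => pclvgCall σ1 σ2 U K' τ) =ᶠ[nhds K] pg2d U c2 b := by
      rw [hderiv]
      exact eventually_of_mem (Ioi_mem_nhds h) (fun x hx => if_neg (not_lt.mpr (le_of_lt hx)))
    rw [Filter.EventuallyEq.deriv_eq hev, (hasDerivAt_pg2d U c2 b K).deriv]
  refine ⟨hC1, hC2a, hC2b, ?_, ?_, ?_, ?_⟩
  · -- ODE below the barrier
    intro K hK
    rw [hdd1 K hK.2, hEq1 K hK.2]
    unfold pg1 pg1dd
    rw [ha]
    field_simp
    ring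
  · -- ODE above the barrier
    intro K hK
    rw [hdd2 K hK, hEq2 K (le_of_lt hK)]
    unfold pg2 pg2dd
    rw [hb]
    field_simp
    ring
  · -- limit at 0⁺
    have hval : pg1 U c a 0 = U := by
      unfold pg1
      rw [show a * (0 : ℝ) + -(a * U) = -a * 0 + -(a * U) by ring]
      ring
    have h0 : Tendsto (pg1 U c a) (nhdsWithin 0 (Set.Ioi 0)) (nhds U) := by
      have := ((contDiff_pg1 U c a 1).continuous.tendsto 0).mono_left
        (nhdsWithin_le_nhds (s := Set.Ioi (0 : ℝ)))
      rwa [hval] at this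
    have hev : (fun K => pclvgCall σ1 σ2 U K τ) =ᶠ[nhdsWithin 0 (Set.Ioi 0)] pg1 U c a :=
      eventually_of_mem (mem_nhdsWithin_of_mem_nhds (Iio_mem_nhds hU)) (fun x hx => hEq1 x hx)
    exact Filter.Tendsto.congr' hev.symm h0
  · -- limit at +∞
    have hb0 : (0 : ℝ) < b := by rw [hb]; positivity
    have hlin : Tendsto (fun K : ℝ => -b * K + b * U) atTop atBot := by
      apply tendsto_atBot_add_const_right
      exact (tendsto_const_mul_atBot_of_neg (by linarith)).mpr tendsto_id
    have h0 : Tendsto (pg2 U c2 b) atTop (nhds 0) := by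
      unfold pg2
      have := (Real.tendsto_exp_atBot.comp hlin).const_mul c2
      simpa using this
    have hev : (fun K => pclvgCall σ1 σ2 U K τ) =ᶠ[atTop] pg2 U c2 b :=
      (eventually_ge_atTop U).mono (fun x hx => hEq2 x hx)
    exact Filter.Tendsto.congr' hev.symm h0
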